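/- Let p : X → S and q : Y → S be Grothendieck opfibrations classified by functors F, G : S → Cat, and let α : F ⟹ G be a natural transformation such that each component α_s : F(s) → G(s) admits a left adjoint β_s : G(s) → F(s). If moreover every naturality square of α is left adjointable (its Beck–Chevalley mate is an isomorphism), then the β_s assemble into a pseudonatural transformation G ⟹ F, i.e. for every morphism f : s → s' in S there is a natural isomorphism F(f) ∘ β_s ≅ β_{s'} ∘ G(f) satisfying the coherence conditions for composition of morphisms in S. -/

import Mathlib

open CategoryTheory

variable {S : Type*} [Category S]

section BCAuxGeneral
variable {C D E F' : Type*} [Category C] [Category D] [Category E] [Category F']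

theorem whiskerLeft_eqToHom' (K : C ⥤ D) {F₁ F₂ : D ⥤ E} (h : F₁ = F₂) :
    Functor.whiskerLeft K (eqToHom h) = eqToHom (by rw [h]) := by subst h; simp

theorem whiskerRight_eqToHom' {F₁ F₂ : C ⥤ D} (h : F₁ = F₂) (K : D ⥤ E) :
    Functor.whiskerRight (eqToHom h) K = eqToHom (by rw [h]) := by subst h; simp

variable {L₁ : C ⥤ D} {R₁ : D ⥤ C} {L₂ : E ⥤ F'} {R₂ : F' ⥤ E}

theorem mateEquiv_symm_conj (adj₁ : L₁ ⊣ R₁) (adj₂ : L₂ ⊣ R₂)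
    {G G' : C ⥤ E} {H H' : D ⥤ F'}
    (hG : G = G') (hH : H = H') (θ : R₁ ⋙ G ⟶ H ⋙ R₂) :
    (mateEquiv (G := G') (H := H') adj₁ adj₂).symm
        (eqToHom (by rw [hG]) ≫ θ ≫ eqToHom (by rw [hH])) =
      eqToHom (by rw [hG]) ≫ (mateEquiv adj₁ adj₂).symm θ ≫ eqToHom (by rw [hH]) := by
  subst hG; subst hH; simp
  exact (Category.comp_id _).symm

theorem mateEquiv_symm_id' (adj : L₁ ⊣ R₁) (h : R₁ ⋙ 𝟭 C = 𝟭 D ⋙ R₁) :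
    (mateEquiv (G := 𝟭 C) (H := 𝟭 D) adj adj).symm (eqToHom h) =
      eqToHom (show 𝟭 C ⋙ L₁ = L₁ ⋙ 𝟭 D by rw [Functor.id_comp, Functor.comp_id]) := by
  ext x
  simp [mateEquiv, eqToHom_app, eqToHom_map]

end BCAuxGeneral

section BCVComp
universe v₁ v₂ v₃ v₄ v₅ v₆ u₁ u₂ u₃ u₄ u₅ u₆
variable {A : Type u₁} {B : Type u₂} {C : Type u₃} {D : Type u₄} {E : Type u₅} {F : Type u₆}
variable [Category.{v₁} A] [Category.{v₂} B] [Category.{v₃} C]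
variable [Category.{v₄} D] [Category.{v₅} E] [Category.{v₆} F]
variable {G₁ : A ⥤ C} {G₂ : C ⥤ E} {H₁ : B ⥤ D} {H₂ : D ⥤ F}
variable {L₁ : A ⥤ B} {R₁ : B ⥤ A} {L₂ : C ⥤ D} {R₂ : D ⥤ C} {L₃ : E ⥤ F} {R₃ : F ⥤ E}

theorem mateEquiv_symm_vcomp (adj₁ : L₁ ⊣ R₁) (adj₂ : L₂ ⊣ R₂) (adj₃ : L₃ ⊣ R₃)
    (α : R₁ ⋙ G₁ ⟶ H₁ ⋙ R₂) (β : R₂ ⋙ G₂ ⟶ H₂ ⋙ R₃) :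
    (mateEquiv (G := G₁ ⋙ G₂) (H := H₁ ⋙ H₂) adj₁ adj₃).symm
        (TwoSquare.vComp α β) =
      TwoSquare.hComp ((mateEquiv adj₁ adj₂).symm α)
        ((mateEquiv adj₂ adj₃).symm β) := by
  apply (mateEquiv (G := G₁ ⋙ G₂) (H := H₁ ⋙ H₂) adj₁ adj₃).injective
  rw [Equiv.apply_symm_apply, mateEquiv_vcomp (adj₂ := adj₂)]
  congr 1 <;> exact (Equiv.apply_symm_apply _ _).symm

end BCVComp

/-- The Beck–Chevalley mate `G f ⋙ β s' ⟶ β s ⋙ F f` of the naturality square of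
`α : F ⟶ G` with respect to the pointwise adjunctions `β s ⊣ α.app s`. -/
noncomputable def bcMate {F G : S ⥤ Cat} (α : F ⟶ G)
    (β : ∀ s : S, (G.obj s : Type _) ⥤ (F.obj s : Type _))
    (adj : ∀ s : S, β s ⊣ ((α.app s).toFunctor : (F.obj s : Type _) ⥤ (G.obj s : Type _)))
    {s s' : S} (f : s ⟶ s') :
    ((G.map f).toFunctor : (G.obj s : Type _) ⥤ (G.obj s' : Type _)) ⋙ β s' ⟶
      β s ⋙ ((F.map f).toFunctor : (F.obj s : Type _) ⥤ (F.obj s' : Type _)) :=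
  (mateEquiv (adj s) (adj s')).symm
    (eqToHom (by exact congrArg Cat.Hom.toFunctor (α.naturality f).symm))

theorem bcMate_id {F G : S ⥤ Cat} (α : F ⟶ G)
    (β : ∀ s : S, (G.obj s : Type _) ⥤ (F.obj s : Type _))
    (adj : ∀ s : S, β s ⊣ ((α.app s).toFunctor : (F.obj s : Type _) ⥤ (G.obj s : Type _)))
    (s : S) :
    bcMate α β adj (𝟙 s) = eqToHom (by rw [F.map_id, G.map_id]; rfl) := by
  have hG : ((G.map (𝟙 s)).toFunctor : (G.obj s : Type _) ⥤ (G.obj s : Type _)) = 𝟭 _ := by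
    rw [G.map_id]; rfl
  have hF : ((F.map (𝟙 s)).toFunctor : (F.obj s : Type _) ⥤ (F.obj s : Type _)) = 𝟭 _ := by
    rw [F.map_id]; rfl
  have h0 : (((α.app s).toFunctor : (F.obj s : Type _) ⥤ (G.obj s : Type _)) ⋙ 𝟭 _ :
      (F.obj s : Type _) ⥤ (G.obj s : Type _)) = 𝟭 _ ⋙ (α.app s).toFunctor := by
    rw [Functor.id_comp, Functor.comp_id]
  have key : (eqToHom (by exact congrArg Cat.Hom.toFunctor (α.naturality (𝟙 s)).symm) :
      ((α.app s).toFunctor : (F.obj s : Type _) ⥤ (G.obj s : Type _)) ⋙ (G.map (𝟙 s)).toFunctor ⟶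
        (F.map (𝟙 s)).toFunctor ⋙ (α.app s).toFunctor) =
      eqToHom (by rw [hG.symm]) ≫ eqToHom h0 ≫ eqToHom (by rw [hF.symm]) := by
    simp
  rw [bcMate, key, mateEquiv_symm_conj (adj s) (adj s) hG.symm hF.symm (eqToHom h0),
    mateEquiv_symm_id' (adj s) h0]
  simp

theorem bcMate_comp {F G : S ⥤ Cat} (α : F ⟶ G)
    (β : ∀ s : S, (G.obj s : Type _) ⥤ (F.obj s : Type _))
    (adj : ∀ s : S, β s ⊣ ((α.app s).toFunctor : (F.obj s : Type _) ⥤ (G.obj s : Type _)))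
    {s s' s'' : S} (f : s ⟶ s') (g : s' ⟶ s'') :
    bcMate α β adj (f ≫ g) =
      eqToHom (by rw [G.map_comp]; rfl) ≫
        Functor.whiskerLeft ((G.map f).toFunctor : (G.obj s : Type _) ⥤ (G.obj s' : Type _))
          (bcMate α β adj g) ≫
          Functor.whiskerRight (bcMate α β adj f)
            ((F.map g).toFunctor : (F.obj s' : Type _) ⥤ (F.obj s'' : Type _)) ≫
            eqToHom (by rw [F.map_comp]; rfl) := by
  have hG : ((G.map (f ≫ g)).toFunctor : (G.obj s : Type _) ⥤ (G.obj s'' : Type _)) =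
      ((G.map f).toFunctor : (G.obj s : Type _) ⥤ (G.obj s' : Type _)) ⋙
        ((G.map g).toFunctor : (G.obj s' : Type _) ⥤ (G.obj s'' : Type _)) := by
    rw [G.map_comp]; rfl
  have hF : ((F.map (f ≫ g)).toFunctor : (F.obj s : Type _) ⥤ (F.obj s'' : Type _)) =
      ((F.map f).toFunctor : (F.obj s : Type _) ⥤ (F.obj s' : Type _)) ⋙
        ((F.map g).toFunctor : (F.obj s' : Type _) ⥤ (F.obj s'' : Type _)) := by
    rw [F.map_comp]; rfl
  have hvcomp : TwoSquare.vComp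
        (eqToHom (by exact congrArg Cat.Hom.toFunctor (α.naturality f).symm) :
          ((α.app s).toFunctor : (F.obj s : Type _) ⥤ (G.obj s : Type _)) ⋙ (G.map f).toFunctor ⟶
            (F.map f).toFunctor ⋙ (α.app s').toFunctor)
        (eqToHom (by exact congrArg Cat.Hom.toFunctor (α.naturality g).symm) :
          ((α.app s').toFunctor : (F.obj s' : Type _) ⥤ (G.obj s' : Type _)) ⋙ (G.map g).toFunctor ⟶
            (F.map g).toFunctor ⋙ (α.app s'').toFunctor) =
      eqToHom (by rw [hG]) ≫
        (eqToHom (by exact congrArg Cat.Hom.toFunctor (α.naturality (f ≫ g)).symm) :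
          ((α.app s).toFunctor : (F.obj s : Type _) ⥤ (G.obj s : Type _)) ⋙ (G.map (f ≫ g)).toFunctor ⟶
            (F.map (f ≫ g)).toFunctor ⋙ (α.app s'').toFunctor) ≫ eqToHom (by rw [hF]) := by
    ext x
    simp [TwoSquare.vComp, eqToHom_map]
  have := mateEquiv_symm_vcomp (adj s) (adj s') (adj s'')
    (eqToHom (by exact congrArg Cat.Hom.toFunctor (α.naturality f).symm) :
      ((α.app s).toFunctor : (F.obj s : Type _) ⥤ (G.obj s : Type _)) ⋙ (G.map f).toFunctor ⟶
        (F.map f).toFunctor ⋙ (α.app s').toFunctor)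
    (eqToHom (by exact congrArg Cat.Hom.toFunctor (α.naturality g).symm) :
      ((α.app s').toFunctor : (F.obj s' : Type _) ⥤ (G.obj s' : Type _)) ⋙ (G.map g).toFunctor ⟶
        (F.map g).toFunctor ⋙ (α.app s'').toFunctor)
  rw [hvcomp, mateEquiv_symm_conj (adj s) (adj s'') hG hF] at this
  rw [TwoSquare.hComp] at this
  rw [bcMate, bcMate, bcMate]
  set M : (G.map (f ≫ g)).toFunctor ⋙ β s'' ⟶ β s ⋙ (F.map (f ≫ g)).toFunctor :=
    (mateEquiv (adj s) (adj s'')).symm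
      (eqToHom (by exact congrArg Cat.Hom.toFunctor (α.naturality (f ≫ g)).symm)) with hM
  ext x
  have h2 := congrArg (fun t => NatTrans.app t x) this
  simp at h2 ⊢
  rw [eqToHom_comp_iff, comp_eqToHom_iff] at h2
  rw [h2]
  simp only [Category.assoc]
  rfl

/-- let `p` and `q` be the opfibrations classified by `F, G : S ⥤ Cat`, and
`α : F ⟶ G` a natural transformation whose components admit left adjoints `β s ⊣ α.app s`.
If every naturality square of `α` is left adjointable (its Beck–Chevalley mate is an
isomorphism), then the `β s` assemble into a pseudonatural transformation `G ⟹ F`: for each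
`f : s ⟶ s'` there is a natural isomorphism `G f ⋙ β s' ≅ β s ⋙ F f` (given by the mate),
compatible with identities and with composition of morphisms of `S`. -/
theorem left_adjointable_pointwise_adjoints_pseudonatural
    {F G : S ⥤ Cat} (α : F ⟶ G)
    (β : ∀ s : S, (G.obj s : Type _) ⥤ (F.obj s : Type _))
    (adj : ∀ s : S, β s ⊣ ((α.app s).toFunctor : (F.obj s : Type _) ⥤ (G.obj s : Type _)))
    (hBC : ∀ {s s' : S} (f : s ⟶ s'), IsIso (bcMate α β adj f)) :
    ∃ iso : ∀ {s s' : S} (f : s ⟶ s'),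
        ((G.map f).toFunctor : (G.obj s : Type _) ⥤ (G.obj s' : Type _)) ⋙ β s' ≅
          β s ⋙ ((F.map f).toFunctor : (F.obj s : Type _) ⥤ (F.obj s' : Type _)),
      (∀ {s s' : S} (f : s ⟶ s'), (iso f).hom = bcMate α β adj f) ∧
      (∀ s : S, (iso (𝟙 s)).hom =
        eqToHom (by rw [F.map_id, G.map_id]; rfl)) ∧
      (∀ {s s' s'' : S} (f : s ⟶ s') (g : s' ⟶ s''),
        (iso (f ≫ g)).hom =
          eqToHom (by rw [G.map_comp]; rfl) ≫
            Functor.whiskerLeft ((G.map f).toFunctor : (G.obj s : Type _) ⥤ (G.obj s' : Type _)) (iso g).hom ≫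
              Functor.whiskerRight (iso f).hom
                ((F.map g).toFunctor : (F.obj s' : Type _) ⥤ (F.obj s'' : Type _)) ≫
                eqToHom (by rw [F.map_comp]; rfl)) := by
  refine ⟨fun {s s'} f => @asIso _ _ _ _ (bcMate α β adj f) (hBC f), fun {s s'} f => rfl,
    fun s => ?_, fun {s s' s''} f g => ?_⟩
  · rw [asIso_hom, bcMate_id]
  · rw [asIso_hom, asIso_hom, asIso_hom, bcMate_comp]
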